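/- Let Σ be a type, w : ℕ → Option Σ, u : ℕ, and let w' := Function.update w u none. Suppose there are positions with x_o ≤ z₁, z₁ ⤳_w u, u ⤳_w z₂, z₂ ≤ x_c, x_c < y_o, y_o ≤ z₃, z₃ ⤳_w z₄, z₄ ≤ y_c, such that w[x_o,z₁] = w[y_o,z₃] and w[z₂,x_c] = w[z₄,y_c]. Then w'[x_o,x_c] = w'[y_o,y_c]. (The reset case ψ₇ in the proof of Lemma 3.4 of the paper: deleting a symbol strictly inside the first interval when the second interval has an adjacent pair of matching pieces yields equal subwords.) -/

import Mathlib

/-- `y` carries the next symbol after `x` in the partial word `w`. -/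
def Nxt {α : Type*} (w : ℕ → Option α) (x y : ℕ) : Prop :=
  w x ≠ none ∧ w y ≠ none ∧ x < y ∧ ∀ z, x < z → z < y → w z = none

/-- The subword of `w` between positions `i` and `j` (inclusive). -/
def subword {α : Type*} (w : ℕ → Option α) (i j : ℕ) : List α :=
  (List.range' i (j + 1 - i)).filterMap w

lemma subword_split {α : Type*} (v : ℕ → Option α) (i a b j : ℕ)
    (hia : i ≤ a) (hab : a < b) (hbj : b ≤ j)
    (hnone : ∀ z, a < z → z < b → v z = none) :
    subword v i j = subword v i a ++ subword v b j := by
  unfold subword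
  have e1 : List.range' i (j + 1 - i) =
      List.range' i (a + 1 - i) ++ List.range' (a + 1) (b - (a + 1)) ++
        List.range' b (j + 1 - b) := by
    have k1 : List.range' i (a + 1 - i) 1 ++ List.range' (i + 1 * (a + 1 - i)) (b - (a + 1)) 1 =
        List.range' i (a + 1 - i + (b - (a + 1))) 1 := List.range'_append
    rw [show i + 1 * (a + 1 - i) = a + 1 by omega,
      show a + 1 - i + (b - (a + 1)) = b - i by omega] at k1
    have k2 : List.range' i (b - i) 1 ++ List.range' (i + 1 * (b - i)) (j + 1 - b) 1 =
        List.range' i (b - i + (j + 1 - b)) 1 := List.range'_append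
    rw [show i + 1 * (b - i) = b by omega,
      show b - i + (j + 1 - b) = j + 1 - i by omega] at k2
    rw [← k2, ← k1]
  rw [e1, List.filterMap_append, List.filterMap_append]
  have e2 : (List.range' (a + 1) (b - (a + 1))).filterMap v = [] := by
    rw [List.filterMap_eq_nil_iff]
    intro z hz
    rw [List.mem_range'_1] at hz
    simp [hnone z (by omega) (by omega)]
  rw [e2, List.append_nil]

lemma subword_update_of_not_mem {α : Type*} (v : ℕ → Option α) (u i j : ℕ)
    (h : u < i ∨ j < u) :
    subword (Function.update v u none) i j = subword v i j := by
  unfold subword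
  apply List.filterMap_congr
  intro z hz
  rw [List.mem_range'_1] at hz
  rw [Function.update_of_ne (by omega)]

theorem reset_inside_case {α : Type*} (w : ℕ → Option α)
    (u xo xc yo yc z₁ z₂ z₃ z₄ : ℕ)
    (h₁ : xo ≤ z₁) (hn₁ : Nxt w z₁ u) (hn₂ : Nxt w u z₂) (h₂ : z₂ ≤ xc)
    (h₃ : xc < yo) (h₄ : yo ≤ z₃) (hn₃ : Nxt w z₃ z₄) (h₅ : z₄ ≤ yc)
    (heq₁ : subword w xo z₁ = subword w yo z₃)
    (heq₂ : subword w z₂ xc = subword w z₄ yc) :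
    subword (Function.update w u none) xo xc =
      subword (Function.update w u none) yo yc := by
  obtain ⟨_, _, hlt₁, hg₁⟩ := hn₁
  obtain ⟨_, _, hlt₂, hg₂⟩ := hn₂
  obtain ⟨_, _, hlt₃, hg₃⟩ := hn₃
  have L : subword (Function.update w u none) xo xc =
      subword w xo z₁ ++ subword w z₂ xc := by
    rw [subword_split (Function.update w u none) xo z₁ z₂ xc h₁ (by omega) h₂ ?_,
      subword_update_of_not_mem _ _ _ _ (by omega),
      subword_update_of_not_mem _ _ _ _ (by omega)]
    intro z hz₁ hz₂
    rcases eq_or_ne z u with rfl | hne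
    · simp
    · rw [Function.update_of_ne hne]
      rcases lt_or_gt_of_ne hne with h | h
      · exact hg₁ z hz₁ h
      · exact hg₂ z h hz₂
  have R : subword (Function.update w u none) yo yc =
      subword w yo z₃ ++ subword w z₄ yc := by
    rw [subword_update_of_not_mem _ _ _ _ (by omega)]
    exact subword_split w yo z₃ z₄ yc h₄ hlt₃ h₅ hg₃
  rw [L, R, heq₁, heq₂]
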